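/- Let G be a finite simple connected graph with at least one edge and maximum degree Δ. Then for every vertex v_i of degree d_i, E_G(v_i) ≥ d_i/Δ, and equality holds (for some vertex) if and only if G is isomorphic to the complete bipartite graph K_{d,d} with d = Δ. -/

import Mathlib

open Matrix Finset

-- quad form at singles
lemma quad_single {n : ℕ} (M : Matrix (Fin n) (Fin n) ℝ) (a b : Fin n) :
    (Pi.single a 1 : Fin n → ℝ) ⬝ᵥ (M *ᵥ Pi.single b 1) = M a b := by
  simp [dotProduct, mulVec, Pi.single_apply, mul_ite, ite_mul]

lemma psd_diag_nonneg {n : ℕ} {M : Matrix (Fin n) (Fin n) ℝ} (hM : M.PosSemidef) (i : Fin n) :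
    0 ≤ M i i := by
  have h := hM.dotProduct_mulVec_nonneg (Pi.single i (1:ℝ))
  simpa [quad_single, star_trivial] using h

lemma psd_col_zero {n : ℕ} {M : Matrix (Fin n) (Fin n) ℝ} (hM : M.PosSemidef) {i : Fin n}
    (hii : M i i = 0) (j : Fin n) : M j i = 0 := by
  have hsymm : M i j = M j i := by
    have h1 := congrFun (congrFun hM.1 i) j
    simpa [conjTranspose_apply] using h1.symm
  have key : ∀ t : ℝ, 0 ≤ 2 * t * M j i + M j j := by
    intro t
    have h0 := hM.dotProduct_mulVec_nonneg (t • (Pi.single i 1 : Fin n → ℝ) + Pi.single j 1)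
    have h1 : (0:ℝ) ≤ t * (t * M i i) + t * M j i + (t * M i j + M j j) := by
      simpa [mulVec_add, mulVec_smul, dotProduct_add, add_dotProduct, dotProduct_smul,
        smul_dotProduct, quad_single, smul_eq_mul, mul_add, add_mul, mul_assoc,
        star_trivial] using h0
    rw [hii, hsymm] at h1
    linarith
  by_contra hne
  have hx : 2 * (-(M j j + 1) / (2 * M j i)) * M j i = -(M j j + 1) := by
    field_simp
  have h := key (-(M j j + 1) / (2 * M j i))
  rw [hx] at h
  linarith

namespace Matrix.PosSemidef

noncomputable def sqrt {n : ℕ} {A : Matrix (Fin n) (Fin n) ℝ} (hA : A.PosSemidef) :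
    Matrix (Fin n) (Fin n) ℝ :=
  (hA.1.eigenvectorUnitary : Matrix (Fin n) (Fin n) ℝ) *
    Matrix.diagonal ((RCLike.ofReal : ℝ → ℝ) ∘ Real.sqrt ∘ hA.1.eigenvalues) *
    (star (hA.1.eigenvectorUnitary : Matrix (Fin n) (Fin n) ℝ))

open scoped MatrixOrder in
lemma sqrt_eq_cfcSqrt {n : ℕ} {A : Matrix (Fin n) (Fin n) ℝ} (hA : A.PosSemidef) :
    hA.sqrt = CFC.sqrt A := by
  rw [CFC.sqrt_eq_cfc, cfc_nnreal_eq_real _ A hA.nonneg, hA.1.cfc_eq]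
  simp only [IsHermitian.cfc, Matrix.PosSemidef.sqrt, Unitary.conjStarAlgAut_apply]
  congr 2
  funext k
  congr 1
  funext j
  simp [max_eq_left (hA.eigenvalues_nonneg j)]

open scoped MatrixOrder in
lemma posSemidef_sqrt {n : ℕ} {A : Matrix (Fin n) (Fin n) ℝ} (hA : A.PosSemidef) :
    hA.sqrt.PosSemidef := by
  rw [sqrt_eq_cfcSqrt]
  exact (CFC.sqrt_nonneg A).posSemidef

open scoped MatrixOrder in
lemma sqrt_mul_self {n : ℕ} {A : Matrix (Fin n) (Fin n) ℝ} (hA : A.PosSemidef) :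
    hA.sqrt * hA.sqrt = A := by
  rw [sqrt_eq_cfcSqrt]
  exact CFC.sqrt_mul_sqrt_self A hA.nonneg

open scoped MatrixOrder in
lemma eq_sqrt_of_sq_eq {n : ℕ} {A B : Matrix (Fin n) (Fin n) ℝ} (hB : B.PosSemidef)
    (hA : A.PosSemidef) (h : B ^ 2 = A) : B = hA.sqrt := by
  rw [sqrt_eq_cfcSqrt, eq_comm, CFC.sqrt_eq_iff A B hA.nonneg hB.nonneg, ← pow_two, h]

end Matrix.PosSemidef

section spectral
variable {n : ℕ} (G : SimpleGraph (Fin n)) [DecidableRel G.Adj]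

lemma adj_herm : (G.adjMatrix ℝ).IsHermitian := by
  rw [Matrix.IsHermitian, conjTranspose_eq_transpose_of_trivial]
  exact G.isSymm_adjMatrix

lemma adj_row_sum (i : Fin n) : ∑ j, G.adjMatrix ℝ i j = (G.degree i : ℝ) := by
  simp [SimpleGraph.adjMatrix_apply, Finset.sum_boole, SimpleGraph.degree,
    SimpleGraph.neighborFinset_eq_filter]

lemma eig_abs_le (k : Fin n) : |(adj_herm G).eigenvalues k| ≤ (G.maxDegree : ℝ) := by
  set A := G.adjMatrix ℝ with hAdef
  set hA := adj_herm G
  have hv : A *ᵥ ⇑(hA.eigenvectorBasis k) = hA.eigenvalues k • ⇑(hA.eigenvectorBasis k) :=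
    hA.mulVec_eigenvectorBasis k
  have hvne : ⇑(hA.eigenvectorBasis k) ≠ 0 := by
    have h0 := hA.eigenvectorBasis.orthonormal.ne_zero k
    intro h; apply h0; ext j; exact congrFun h j
  have heig : Module.End.HasEigenvalue (Matrix.toLin' A) (hA.eigenvalues k) := by
    apply Module.End.hasEigenvalue_of_hasEigenvector (x := ⇑(hA.eigenvectorBasis k))
    exact ⟨Module.End.mem_eigenspace_iff.2 (by rw [Matrix.toLin'_apply, hv]), hvne⟩
  obtain ⟨k', hk'⟩ := eigenvalue_mem_ball heig
  rw [Metric.mem_closedBall, Real.dist_eq] at hk'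
  have hAkk : A k' k' = 0 := by simp [hAdef]
  rw [hAkk, sub_zero] at hk'
  have hd : ∑ j ∈ Finset.univ.erase k', ‖A k' j‖ = (G.degree k' : ℝ) := by
    have h1 : ∀ j, ‖A k' j‖ = A k' j := by
      intro j
      rw [hAdef, SimpleGraph.adjMatrix_apply]
      split <;> simp
    rw [Finset.sum_congr rfl (fun j _ => h1 j), Finset.sum_erase _ hAkk]
    exact adj_row_sum G k'
  rw [hd] at hk'
  exact hk'.trans (by exact_mod_cast G.degree_le_maxDegree k')

lemma myconj_mul {U : Matrix (Fin n) (Fin n) ℝ} (hUU : star U * U = 1) (c d : Fin n → ℝ) :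
    (U * diagonal c * star U) * (U * diagonal d * star U) =
      U * diagonal (fun k => c k * d k) * star U := by
  simp only [mul_assoc]
  rw [← mul_assoc (star U) U, hUU, one_mul, ← mul_assoc (diagonal c) (diagonal d),
    diagonal_mul_diagonal]

lemma myconj_sub_smul {U : Matrix (Fin n) (Fin n) ℝ} (r : ℝ) (c d : Fin n → ℝ) :
    r • (U * diagonal c * star U) - U * diagonal d * star U =
      U * diagonal (fun k => r * c k - d k) * star U := by
  have h : diagonal (fun k => r * c k - d k) = r • diagonal c - diagonal d := by
    ext a b
    by_cases hab : a = b <;> simp [Matrix.diagonal_apply, hab]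
  rw [h]
  simp only [sub_mul, mul_sub, smul_mul_assoc, mul_smul_comm]

lemma abs_spectral :
    (Matrix.posSemidef_self_mul_conjTranspose (G.adjMatrix ℝ)).sqrt =
      ((adj_herm G).eigenvectorUnitary : Matrix (Fin n) (Fin n) ℝ) *
        diagonal (fun k => |(adj_herm G).eigenvalues k|) *
        star ((adj_herm G).eigenvectorUnitary : Matrix (Fin n) (Fin n) ℝ) := by
  set hA := adj_herm G with hhA
  set U := (hA.eigenvectorUnitary : Matrix (Fin n) (Fin n) ℝ) with hU
  have hUU : star U * U = 1 := Matrix.mem_unitaryGroup_iff'.mp hA.eigenvectorUnitary.2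
  have hspec : G.adjMatrix ℝ = U * diagonal hA.eigenvalues * star U := by
    simpa [RCLike.ofReal_real_eq_id, Function.id_comp] using hA.spectral_theorem
  symm
  apply Matrix.PosSemidef.eq_sqrt_of_sq_eq
  · rw [Matrix.star_eq_conjTranspose]
    exact (Matrix.PosSemidef.diagonal (fun k => abs_nonneg _)).mul_mul_conjTranspose_same U
  · have hAH : (G.adjMatrix ℝ)ᴴ = G.adjMatrix ℝ := adj_herm G
    rw [pow_two, myconj_mul hUU, hAH]
    conv_rhs => rw [hspec]
    rw [myconj_mul hUU]
    have habs : (fun k => |hA.eigenvalues k| * |hA.eigenvalues k|) =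
        (fun k => hA.eigenvalues k * hA.eigenvalues k) := funext fun k => abs_mul_abs_self _
    rw [habs]

lemma M_psd : ((G.maxDegree : ℝ) •
      (Matrix.posSemidef_self_mul_conjTranspose (G.adjMatrix ℝ)).sqrt -
      G.adjMatrix ℝ * G.adjMatrix ℝ).PosSemidef := by
  set hA := adj_herm G with hhA
  set U := (hA.eigenvectorUnitary : Matrix (Fin n) (Fin n) ℝ) with hU
  have hUU : star U * U = 1 := Matrix.mem_unitaryGroup_iff'.mp hA.eigenvectorUnitary.2
  have hspec : G.adjMatrix ℝ = U * diagonal hA.eigenvalues * star U := by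
    simpa [RCLike.ofReal_real_eq_id, Function.id_comp] using hA.spectral_theorem
  have hAA : G.adjMatrix ℝ * G.adjMatrix ℝ =
      U * diagonal (fun k => hA.eigenvalues k * hA.eigenvalues k) * star U := by
    conv_lhs => rw [hspec]
    rw [myconj_mul hUU]
  rw [abs_spectral G, hAA, ← hhA, ← hU, myconj_sub_smul]
  rw [Matrix.star_eq_conjTranspose]
  apply Matrix.PosSemidef.mul_mul_conjTranspose_same
  apply Matrix.PosSemidef.diagonal
  rw [Pi.le_def]
  intro k
  simp only [Pi.zero_apply]
  show (0:ℝ) ≤ (G.maxDegree : ℝ) * |hA.eigenvalues k| - hA.eigenvalues k * hA.eigenvalues k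
  have h1 : |hA.eigenvalues k| ≤ (G.maxDegree : ℝ) := eig_abs_le G k
  have h2 : hA.eigenvalues k * hA.eigenvalues k = |hA.eigenvalues k| * |hA.eigenvalues k| :=
    (abs_mul_abs_self _).symm
  have h3 : (0:ℝ) ≤ |hA.eigenvalues k| := abs_nonneg _
  nlinarith

end spectral

section graphs
variable {n : ℕ} (G : SimpleGraph (Fin n)) [DecidableRel G.Adj]

lemma common_count (i j : Fin n) :
    (G.adjMatrix ℝ * G.adjMatrix ℝ) i j =
      ((G.neighborFinset i ∩ G.neighborFinset j).card : ℝ) := by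
  rw [Matrix.mul_apply]
  have h : ∀ k, G.adjMatrix ℝ i k * G.adjMatrix ℝ k j
      = if k ∈ G.neighborFinset i ∩ G.neighborFinset j then (1:ℝ) else 0 := by
    intro k
    simp only [SimpleGraph.adjMatrix_apply, Finset.mem_inter,
      SimpleGraph.mem_neighborFinset, G.adj_comm k j]
    by_cases h1 : G.Adj i k <;> by_cases h2 : G.Adj j k <;> simp [h1, h2]
  rw [Finset.sum_congr rfl fun k _ => h k, Finset.sum_ite_mem, Finset.univ_inter,
    Finset.sum_const, nsmul_eq_mul, mul_one]

lemma degree_pos_of_connected (hconn : G.Connected) (hedge : G.edgeSet.Nonempty)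
    (v : Fin n) : 0 < G.degree v := by
  rw [SimpleGraph.degree_pos_iff_exists_adj]
  obtain ⟨e, he⟩ := hedge
  induction e with
  | _ u w =>
    rw [SimpleGraph.mem_edgeSet] at he
    rcases eq_or_ne v u with rfl | hne
    · exact ⟨w, he⟩
    · obtain ⟨p⟩ := hconn v u
      cases p with
      | nil => exact absurd rfl hne
      | cons h q => exact ⟨_, h⟩

lemma neighborFinset_card (v : Fin n) : (G.neighborFinset v).card = G.degree v := rfl

lemma combo (hconn : G.Connected) (hedge : G.edgeSet.Nonempty) (i : Fin n)
    (hsum : ∑ j, ((G.neighborFinset i ∩ G.neighborFinset j).card)^2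
      = G.maxDegree^2 * G.degree i) :
    Nonempty (G ≃g completeBipartiteGraph (Fin G.maxDegree) (Fin G.maxDegree)) := by
  have hdeg : ∀ v, 0 < G.degree v := degree_pos_of_connected G hconn hedge
  set c : Fin n → ℕ := fun j => (G.neighborFinset i ∩ G.neighborFinset j).card with hc
  set D := G.maxDegree with hDdef
  have hD : 0 < D := (hdeg i).trans_le (G.degree_le_maxDegree i)
  have hcle : ∀ j, c j ≤ D := fun j =>
    le_trans (le_trans (Finset.card_le_card Finset.inter_subset_left)
      (le_of_eq (neighborFinset_card G i))) (G.degree_le_maxDegree i)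
  have hrow : ∀ j, c j = ∑ k ∈ G.neighborFinset i, (if G.Adj j k then 1 else 0) := by
    intro j
    have h2 : G.neighborFinset i ∩ G.neighborFinset j
        = (G.neighborFinset i).filter (fun k => G.Adj j k) := by
      ext k
      simp [SimpleGraph.mem_neighborFinset, G.adj_comm]
    simp only [hc]
    rw [h2, Finset.card_filter]
  have hcol : ∀ k, ∑ j : Fin n, (if G.Adj j k then 1 else 0) = G.degree k := by
    intro k
    have h3 : Finset.univ.filter (fun j => G.Adj j k) = G.neighborFinset k := by
      ext j
      simp [SimpleGraph.mem_neighborFinset, G.adj_comm]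
    rw [← Finset.card_filter, h3, neighborFinset_card]
  have hsum1 : ∑ j, c j = ∑ k ∈ G.neighborFinset i, G.degree k := by
    rw [Finset.sum_congr rfl fun j _ => hrow j, Finset.sum_comm]
    exact Finset.sum_congr rfl fun k _ => hcol k
  have hsum1le : ∑ j, c j ≤ D * G.degree i := by
    rw [hsum1]
    calc ∑ k ∈ G.neighborFinset i, G.degree k ≤ ∑ k ∈ G.neighborFinset i, D :=
          Finset.sum_le_sum fun k _ => G.degree_le_maxDegree k
      _ = G.degree i * D := by rw [Finset.sum_const, smul_eq_mul, neighborFinset_card]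
      _ = D * G.degree i := Nat.mul_comm _ _
  have h1 : ∑ j, c j ^ 2 ≤ D * ∑ j, c j := by
    rw [Finset.mul_sum]
    exact Finset.sum_le_sum fun j _ => by
      rw [pow_two]; exact Nat.mul_le_mul_right _ (hcle j)
  have h2 : D * ∑ j, c j ≤ D * (D * G.degree i) := Nat.mul_le_mul_left _ hsum1le
  have hsumc : ∑ j, c j = D * G.degree i := by
    have hle : D * (D * G.degree i) ≤ D * ∑ j, c j := by
      calc D * (D * G.degree i) = D ^ 2 * G.degree i := by ring
        _ = ∑ j, c j ^ 2 := hsum.symm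
        _ ≤ D * ∑ j, c j := h1
    exact Nat.eq_of_mul_eq_mul_left hD (le_antisymm h2 hle)
  have hsq : ∑ j, c j ^ 2 = ∑ j, D * c j := by
    rw [← Finset.mul_sum, hsumc]
    calc ∑ j, c j ^ 2 = D ^ 2 * G.degree i := hsum
      _ = D * (D * G.degree i) := by ring
  have hpt : ∀ j, c j = 0 ∨ c j = D := by
    intro j
    have h := (Finset.sum_eq_sum_iff_of_le
      (fun j (_ : j ∈ Finset.univ) => by
        rw [pow_two]; exact Nat.mul_le_mul_right _ (hcle j))).1 hsq j (Finset.mem_univ j)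
    rw [pow_two] at h
    rcases Nat.eq_zero_or_pos (c j) with h0 | hpos
    · exact Or.inl h0
    · exact Or.inr (Nat.eq_of_mul_eq_mul_right hpos h)
  have hnbrdeg : ∀ k ∈ G.neighborFinset i, G.degree k = D := by
    have hEq : ∑ k ∈ G.neighborFinset i, G.degree k = ∑ k ∈ G.neighborFinset i, D := by
      rw [← hsum1, hsumc, Finset.sum_const, smul_eq_mul, neighborFinset_card, Nat.mul_comm]
    intro k hk
    exact (Finset.sum_eq_sum_iff_of_le
      (fun k _ => G.degree_le_maxDegree k)).1 hEq k hk
  have hci : c i = G.degree i := by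
    simp only [hc, Finset.inter_self, neighborFinset_card]
  have hdi : G.degree i = D := by
    rcases hpt i with h0 | hD'
    · rw [hci] at h0; exact absurd h0 (hdeg i).ne'
    · rw [← hci]; exact hD'
  set N := G.neighborFinset i with hN
  have hNcard : N.card = D := by rw [hN, neighborFinset_card, hdi]
  set S := Finset.univ.filter (fun j => c j = D) with hS
  have hcS : ∀ j, c j = if j ∈ S then D else 0 := by
    intro j
    by_cases h : j ∈ S
    · rw [if_pos h]; exact (Finset.mem_filter.mp h).2
    · rw [if_neg h]
      rcases hpt j with h0 | hD'
      · exact h0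
      · exact absurd (Finset.mem_filter.mpr ⟨Finset.mem_univ j, hD'⟩) h
  have hScard : S.card = D := by
    have hsc : ∑ j, c j = S.card * D := by
      rw [Finset.sum_congr rfl fun j _ => hcS j, Finset.sum_ite_mem, Finset.univ_inter,
        Finset.sum_const, smul_eq_mul]
    rw [hsumc, hdi] at hsc
    exact (Nat.eq_of_mul_eq_mul_right hD hsc.symm)
  have hNsubS : ∀ j ∈ S, N ⊆ G.neighborFinset j := by
    intro j hj
    have hcj : (N ∩ G.neighborFinset j).card = D := (Finset.mem_filter.mp hj).2
    have hsub : N ∩ G.neighborFinset j = N :=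
      Finset.eq_of_subset_of_card_le Finset.inter_subset_left
        (by rw [hNcard, hcj])
    exact Finset.inter_eq_left.mp hsub
  have hNk : ∀ k ∈ N, G.neighborFinset k = S := by
    intro k hk
    have hsub : S ⊆ G.neighborFinset k := by
      intro j hj
      have hkj := hNsubS j hj hk
      rw [SimpleGraph.mem_neighborFinset] at hkj ⊢
      exact hkj.symm
    refine (Finset.eq_of_subset_of_card_le hsub ?_).symm
    rw [neighborFinset_card, hnbrdeg k hk, hScard]
  have hNj : ∀ j ∈ S, G.neighborFinset j = N := by
    intro j hj
    refine (Finset.eq_of_subset_of_card_le (hNsubS j hj) ?_).symm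
    rw [neighborFinset_card, hNcard]
    exact G.degree_le_maxDegree j
  have hdisj : ∀ j, ¬(j ∈ S ∧ j ∈ N) := by
    rintro j ⟨hjS, hjN⟩
    have hjj : j ∈ G.neighborFinset j := hNsubS j hjS hjN
    rw [SimpleGraph.mem_neighborFinset] at hjj
    exact G.irrefl hjj
  have hiS : i ∈ S := Finset.mem_filter.mpr ⟨Finset.mem_univ i, by rw [hci, hdi]⟩
  have hclosure : ∀ u v, G.Adj u v → (u ∈ S ∨ u ∈ N) → (v ∈ S ∨ v ∈ N) := by
    intro u v huv hu
    rcases hu with hu | hu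
    · right; rw [← hNj u hu, SimpleGraph.mem_neighborFinset]; exact huv
    · left; rw [← hNk u hu, SimpleGraph.mem_neighborFinset]; exact huv
  have hwalk : ∀ (u v : Fin n), G.Walk u v → (u ∈ S ∨ u ∈ N) → (v ∈ S ∨ v ∈ N) := by
    intro u v p
    induction p with
    | nil => exact id
    | cons h q ih => exact fun hu => ih (hclosure _ _ h hu)
  have hcover : ∀ v, v ∈ S ∨ v ∈ N := fun v =>
    hwalk i v (hconn.preconnected i v).some (Or.inl hiS)
  have hadj : ∀ u v, G.Adj u v ↔ ((u ∈ S ∧ v ∈ N) ∨ (u ∈ N ∧ v ∈ S)) := by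
    intro u v
    constructor
    · intro huv
      rcases hcover u with hu | hu
      · exact Or.inl ⟨hu, by rw [← hNj u hu, SimpleGraph.mem_neighborFinset]; exact huv⟩
      · exact Or.inr ⟨hu, by rw [← hNk u hu, SimpleGraph.mem_neighborFinset]; exact huv⟩
    · rintro (⟨hu, hv⟩ | ⟨hu, hv⟩)
      · rw [← SimpleGraph.mem_neighborFinset, hNj u hu]; exact hv
      · rw [← SimpleGraph.mem_neighborFinset, hNk u hu]; exact hv
  let e1 : {x // x ∈ S} ≃ Fin D := S.equivFinOfCardEq hScard
  let e2 : {x // x ∈ N} ≃ Fin D := N.equivFinOfCardEq hNcard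
  let toF : Fin n → Fin D ⊕ Fin D := fun u =>
    if h : u ∈ S then Sum.inl (e1 ⟨u, h⟩)
    else Sum.inr (e2 ⟨u, (hcover u).resolve_left h⟩)
  let invF : Fin D ⊕ Fin D → Fin n := Sum.elim (fun a => (e1.symm a : Fin n))
    (fun b => (e2.symm b : Fin n))
  have hleft : Function.LeftInverse invF toF := by
    intro u
    by_cases h : u ∈ S
    · simp only [toF, invF, dif_pos h, Sum.elim_inl, Equiv.symm_apply_apply]
    · simp only [toF, invF, dif_neg h, Sum.elim_inr, Equiv.symm_apply_apply]
  have hright : Function.RightInverse invF toF := by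
    rintro (a | b)
    · have h : (e1.symm a : Fin n) ∈ S := (e1.symm a).2
      simp only [toF, invF, Sum.elim_inl, dif_pos h, Subtype.coe_eta, Equiv.apply_symm_apply]
    · have h2 : (e2.symm b : Fin n) ∈ N := (e2.symm b).2
      have h : (e2.symm b : Fin n) ∉ S := fun hs => hdisj _ ⟨hs, h2⟩
      simp only [toF, invF, Sum.elim_inr, dif_neg h, Subtype.coe_eta, Equiv.apply_symm_apply]
  let φ : Fin n ≃ (Fin D ⊕ Fin D) := ⟨toF, invF, hleft, hright⟩
  refine ⟨⟨φ, @fun u v => ?_⟩⟩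
  show (completeBipartiteGraph (Fin D) (Fin D)).Adj (toF u) (toF v) ↔ G.Adj u v
  rw [hadj u v]
  by_cases hu : u ∈ S <;> by_cases hv : v ∈ S
  · have hu' : u ∉ N := fun h => hdisj u ⟨hu, h⟩
    have hv' : v ∉ N := fun h => hdisj v ⟨hv, h⟩
    simp [toF, dif_pos hu, dif_pos hv, hu, hv, hu', hv']
  · have hv' : v ∈ N := (hcover v).resolve_left hv
    simp [toF, dif_pos hu, dif_neg hv, hu, hv, hv']
  · have hu' : u ∈ N := (hcover u).resolve_left hu
    simp [toF, dif_neg hu, dif_pos hv, hu, hv, hu']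
  · have hu' : u ∈ N := (hcover u).resolve_left hu
    have hv' : v ∈ N := (hcover v).resolve_left hv
    simp [toF, dif_neg hu, dif_neg hv, hu, hv, hu', hv']

end graphs

section back
variable {n : ℕ} (G : SimpleGraph (Fin n)) [DecidableRel G.Adj]

instance instDecCBG {α β : Type*} : DecidableRel (completeBipartiteGraph α β).Adj := fun v w =>
  inferInstanceAs (Decidable (_ ∨ _))

lemma maxDegree_pos (hedge : G.edgeSet.Nonempty) : 0 < G.maxDegree := by
  obtain ⟨e, he⟩ := hedge
  induction e with
  | _ u w =>
    rw [SimpleGraph.mem_edgeSet] at he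
    exact lt_of_lt_of_le ((G.degree_pos_iff_exists_adj u).mpr ⟨w, he⟩)
      (G.degree_le_maxDegree u)

lemma K_cube (d : ℕ) :
    (completeBipartiteGraph (Fin d) (Fin d)).adjMatrix ℝ *
      (completeBipartiteGraph (Fin d) (Fin d)).adjMatrix ℝ *
      (completeBipartiteGraph (Fin d) (Fin d)).adjMatrix ℝ
      = ((d:ℝ)^2) • (completeBipartiteGraph (Fin d) (Fin d)).adjMatrix ℝ := by
  set J : Matrix (Fin d) (Fin d) ℝ := Matrix.of (fun _ _ => 1) with hJ
  have hB : (completeBipartiteGraph (Fin d) (Fin d)).adjMatrix ℝ = fromBlocks 0 J J 0 := by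
    ext u v
    cases u <;> cases v <;> simp [hJ]
  have hJJ : J * J = (d:ℝ) • J := by
    ext a b
    simp [Matrix.mul_apply, hJ]
  have h4 : (J*J)*J = ((d:ℝ)^2) • J := by
    rw [hJJ, smul_mul_assoc, hJJ, smul_smul, pow_two]
  rw [hB, fromBlocks_multiply, fromBlocks_multiply]
  simp only [Matrix.mul_zero, Matrix.zero_mul, add_zero, zero_add]
  rw [h4, Matrix.fromBlocks_smul, smul_zero]

end back

lemma sym_of_herm {m : ℕ} {X : Matrix (Fin m) (Fin m) ℝ} (h : Xᴴ = X) (a b : Fin m) :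
    X a b = X b a := by
  have h1 := congrFun (congrFun h b) a
  simpa [Matrix.conjTranspose_apply] using h1

lemma backward_energy {n : ℕ} (G : SimpleGraph (Fin n)) [DecidableRel G.Adj]
    (hedge : G.edgeSet.Nonempty)
    (iso : G ≃g completeBipartiteGraph (Fin G.maxDegree) (Fin G.maxDegree)) (i : Fin n) :
    (Matrix.posSemidef_self_mul_conjTranspose (G.adjMatrix ℝ)).sqrt i i
      = (G.degree i : ℝ) / (G.maxDegree : ℝ) := by
  have hD : 0 < G.maxDegree := maxDegree_pos G hedge
  have hDR : (0:ℝ) < (G.maxDegree : ℝ) := by exact_mod_cast hD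
  have hAA : (G.adjMatrix ℝ)ᴴ = G.adjMatrix ℝ := adj_herm G
  have hsub : G.adjMatrix ℝ =
      ((completeBipartiteGraph (Fin G.maxDegree) (Fin G.maxDegree)).adjMatrix ℝ).submatrix
        iso.toEquiv iso.toEquiv := by
    ext u v
    rw [Matrix.submatrix_apply]
    by_cases h : G.Adj u v
    · rw [SimpleGraph.adjMatrix_apply, SimpleGraph.adjMatrix_apply, if_pos h,
        if_pos (show (completeBipartiteGraph (Fin G.maxDegree) (Fin G.maxDegree)).Adj
          (iso.toEquiv u) (iso.toEquiv v) from iso.map_adj_iff.mpr h)]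
    · have h2 : ¬ (completeBipartiteGraph (Fin G.maxDegree) (Fin G.maxDegree)).Adj
          (iso.toEquiv u) (iso.toEquiv v) := fun hk => h (iso.map_adj_iff.mp hk)
      rw [SimpleGraph.adjMatrix_apply, SimpleGraph.adjMatrix_apply, if_neg h, if_neg h2]
  have hA3 : G.adjMatrix ℝ * G.adjMatrix ℝ * G.adjMatrix ℝ
      = ((G.maxDegree:ℝ)^2) • G.adjMatrix ℝ := by
    conv_lhs => rw [hsub]
    rw [Matrix.submatrix_mul_equiv, Matrix.submatrix_mul_equiv, K_cube]
    conv_rhs => rw [hsub]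
    ext a b
    simp [Matrix.submatrix_apply, Matrix.smul_apply]
  have hps : ((G.maxDegree:ℝ)⁻¹ • (G.adjMatrix ℝ * G.adjMatrix ℝ)).PosSemidef := by
    refine Matrix.PosSemidef.of_dotProduct_mulVec_nonneg ?_ ?_
    · simp [Matrix.IsHermitian, Matrix.conjTranspose_smul, Matrix.conjTranspose_mul, hAA]
    · intro x
      have h0 := (Matrix.posSemidef_self_mul_conjTranspose (G.adjMatrix ℝ)).dotProduct_mulVec_nonneg x
      rw [hAA] at h0
      rw [Matrix.smul_mulVec, dotProduct_smul, smul_eq_mul]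
      exact mul_nonneg (inv_nonneg.mpr (le_of_lt hDR)) h0
  have hsq : ((G.maxDegree:ℝ)⁻¹ • (G.adjMatrix ℝ * G.adjMatrix ℝ)) ^ 2
      = G.adjMatrix ℝ * (G.adjMatrix ℝ)ᴴ := by
    rw [pow_two, smul_mul_assoc, mul_smul_comm, smul_smul]
    have hassoc : (G.adjMatrix ℝ * G.adjMatrix ℝ) * (G.adjMatrix ℝ * G.adjMatrix ℝ)
        = ((G.maxDegree:ℝ)^2) • (G.adjMatrix ℝ * G.adjMatrix ℝ) := by
      rw [show (G.adjMatrix ℝ * G.adjMatrix ℝ) * (G.adjMatrix ℝ * G.adjMatrix ℝ)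
        = (G.adjMatrix ℝ * G.adjMatrix ℝ * G.adjMatrix ℝ) * G.adjMatrix ℝ from
          (mul_assoc _ _ _).symm, hA3, smul_mul_assoc]
    rw [hassoc, smul_smul]
    have hone : (G.maxDegree:ℝ)⁻¹ * (G.maxDegree:ℝ)⁻¹ * ((G.maxDegree:ℝ)^2) = 1 := by
      field_simp
    rw [hone, one_smul, hAA]
  have heq := hps.eq_sqrt_of_sq_eq (Matrix.posSemidef_self_mul_conjTranspose (G.adjMatrix ℝ)) hsq
  rw [← heq, Matrix.smul_apply, SimpleGraph.adjMatrix_mul_self_apply_self, smul_eq_mul,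
    div_eq_inv_mul]

/-- The energy of the vertex `i` of a finite simple graph `G`:
the `(i,i)` entry of `|A| = (A Aᴴ)^{1/2}`, where `A` is the adjacency matrix. -/
noncomputable def vertexEnergy {n : ℕ} (G : SimpleGraph (Fin n)) [DecidableRel G.Adj]
    (i : Fin n) : ℝ :=
  (((Matrix.posSemidef_self_mul_conjTranspose (G.adjMatrix ℝ)).1.eigenvectorUnitary : Matrix (Fin n) (Fin n) ℝ) *
    Matrix.diagonal ((RCLike.ofReal : ℝ → ℝ) ∘ Real.sqrt ∘ (Matrix.posSemidef_self_mul_conjTranspose (G.adjMatrix ℝ)).1.eigenvalues) *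
    (star ((Matrix.posSemidef_self_mul_conjTranspose (G.adjMatrix ℝ)).1.eigenvectorUnitary : Matrix (Fin n) (Fin n) ℝ))) i i

theorem stmt_3 {n : ℕ} (G : SimpleGraph (Fin n)) [DecidableRel G.Adj]
    (hconn : G.Connected) (hedge : G.edgeSet.Nonempty) :
    (∀ i : Fin n, (G.degree i : ℝ) / (G.maxDegree : ℝ) ≤ vertexEnergy G i) ∧
    ((∃ i : Fin n, vertexEnergy G i = (G.degree i : ℝ) / (G.maxDegree : ℝ)) ↔
      Nonempty (G ≃g completeBipartiteGraph (Fin G.maxDegree) (Fin G.maxDegree))) := by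
  have hD : 0 < G.maxDegree := maxDegree_pos G hedge
  have hDR : (0:ℝ) < (G.maxDegree : ℝ) := by exact_mod_cast hD
  have hineq : ∀ i : Fin n, (G.degree i : ℝ) / (G.maxDegree : ℝ) ≤ vertexEnergy G i := by
    intro i
    have h0 := psd_diag_nonneg (M_psd G) i
    rw [Matrix.sub_apply, Matrix.smul_apply, SimpleGraph.adjMatrix_mul_self_apply_self,
      smul_eq_mul] at h0
    have hve : vertexEnergy G i
        = (Matrix.posSemidef_self_mul_conjTranspose (G.adjMatrix ℝ)).sqrt i i := rfl
    rw [hve, div_le_iff₀ hDR]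
    linarith
  refine ⟨hineq, ?_, ?_⟩
  · rintro ⟨i, hi⟩
    have hve : vertexEnergy G i
        = (Matrix.posSemidef_self_mul_conjTranspose (G.adjMatrix ℝ)).sqrt i i := rfl
    rw [hve] at hi
    set Q := (Matrix.posSemidef_self_mul_conjTranspose (G.adjMatrix ℝ)).sqrt with hQdef
    have hMii : ((G.maxDegree : ℝ) • Q - G.adjMatrix ℝ * G.adjMatrix ℝ) i i = 0 := by
      rw [Matrix.sub_apply, Matrix.smul_apply, SimpleGraph.adjMatrix_mul_self_apply_self,
        smul_eq_mul, hi]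
      field_simp
      ring
    have hcol := psd_col_zero (M_psd G) hMii
    have hrel : ∀ j, (G.adjMatrix ℝ * G.adjMatrix ℝ) j i = (G.maxDegree : ℝ) * Q j i := by
      intro j
      have h := hcol j
      rw [Matrix.sub_apply, Matrix.smul_apply, smul_eq_mul] at h
      linarith
    have hQherm : Qᴴ = Q :=
      (Matrix.posSemidef_self_mul_conjTranspose (G.adjMatrix ℝ)).posSemidef_sqrt.1
    have hAAherm : (G.adjMatrix ℝ * G.adjMatrix ℝ)ᴴ = G.adjMatrix ℝ * G.adjMatrix ℝ := by
      have h := (Matrix.posSemidef_self_mul_conjTranspose (G.adjMatrix ℝ)).1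
      rwa [show (G.adjMatrix ℝ)ᴴ = G.adjMatrix ℝ from adj_herm G] at h
    have hQQ : Q * Q = G.adjMatrix ℝ * G.adjMatrix ℝ :=
      (Matrix.posSemidef_self_mul_conjTranspose (G.adjMatrix ℝ)).sqrt_mul_self.trans
        (by rw [show (G.adjMatrix ℝ)ᴴ = G.adjMatrix ℝ from adj_herm G])
    have key : ∑ j, ((G.neighborFinset i ∩ G.neighborFinset j).card : ℝ)^2
        = (G.maxDegree : ℝ)^2 * (G.degree i : ℝ) := by
      have e1 : ∀ j, ((G.neighborFinset i ∩ G.neighborFinset j).card : ℝ)^2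
          = ((G.maxDegree : ℝ) * Q i j) * ((G.maxDegree : ℝ) * Q j i) := by
        intro j
        have hc3 : (G.adjMatrix ℝ * G.adjMatrix ℝ) j i = (G.maxDegree : ℝ) * Q j i := hrel j
        have hx : ((G.neighborFinset i ∩ G.neighborFinset j).card : ℝ)
            = (G.maxDegree : ℝ) * Q i j := by
          rw [← common_count G i j, sym_of_herm hAAherm i j, hrel j, sym_of_herm hQherm j i]
        have hy : ((G.neighborFinset i ∩ G.neighborFinset j).card : ℝ)
            = (G.maxDegree : ℝ) * Q j i := by
          rw [← common_count G i j, sym_of_herm hAAherm i j, hrel j]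
        rw [pow_two]
        nth_rewrite 1 [hx]
        rw [hy]
      rw [Finset.sum_congr rfl fun j _ => e1 j]
      have e2 : ∑ j, ((G.maxDegree : ℝ) * Q i j) * ((G.maxDegree : ℝ) * Q j i)
          = (G.maxDegree : ℝ)^2 * ∑ j, Q i j * Q j i := by
        rw [Finset.mul_sum]
        exact Finset.sum_congr rfl fun j _ => by ring
      rw [e2]
      congr 1
      have e3 : ∑ j, Q i j * Q j i = (Q * Q) i i := (Matrix.mul_apply).symm
      rw [e3, hQQ, SimpleGraph.adjMatrix_mul_self_apply_self]
    have keyN : ∑ j, ((G.neighborFinset i ∩ G.neighborFinset j).card)^2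
        = G.maxDegree^2 * G.degree i := by
      exact_mod_cast key
    exact combo G hconn hedge i keyN
  · rintro ⟨iso⟩
    have hne : Nonempty (Fin n) := hconn.nonempty
    obtain ⟨i⟩ := hne
    exact ⟨i, backward_energy G hedge iso i⟩
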